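/- Let G be an infinite profinite group and R = ℤ[G] its group ring. For each open normal subgroup H of G let I_H denote the kernel of the canonical surjection ℤ[G] → ℤ[G/H]. Then for every open normal subgroup H of G, ⋂_K ((I_K : I_H) + I_H) = I_H, where K runs over all open normal subgroups of G with K ≤ H. In particular, the downward filtered set 𝓘 = {I_H : H open normal in G} satisfies the intersection condition ⋂_{J∈𝓘, J⊆I} ((J : I) + I) = I for all I ∈ 𝓘. -/

import Mathlib

open Function Pointwise

/-- For left ideals `J I` of `R`, the set `(J : I) = {r : R | I·r ⊆ J}`. -/
def idealColon (R : Type) [Ring R] (J I : Ideal R) : Set R :=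
  {r : R | ∀ i ∈ I, i * r ∈ J}

/-- For a normal subgroup `H` of `G`, the ideal `I_H`: the kernel of the canonical
surjection `ℤ[G] → ℤ[G/H]`. -/
noncomputable def augIdeal (G : Type) [Group G] (H : Subgroup G) (hn : H.Normal) :
    Ideal (MonoidAlgebra ℤ G) :=
  letI := hn
  RingHom.ker (MonoidAlgebra.mapDomainRingHom ℤ (QuotientGroup.mk' H))

section Aux
variable {G : Type} [Group G]

theorem mem_augIdeal_iff {H : Subgroup G} [hn : H.Normal] (x : MonoidAlgebra ℤ G) :
    x ∈ augIdeal G H hn ↔ MonoidAlgebra.mapDomainRingHom ℤ (QuotientGroup.mk' H) x = 0 :=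
  RingHom.mem_ker

theorem mapDomainRingHom_single {H : Type} [Group H] (f : G →* H) (g : G) (z : ℤ) :
    MonoidAlgebra.mapDomainRingHom ℤ f (MonoidAlgebra.single g z) =
      MonoidAlgebra.single (f g) z := by
  simp [MonoidAlgebra.mapDomainRingHom_apply, Finsupp.mapDomain_single]

theorem single_sub_one_mem {H : Subgroup G} [hn : H.Normal] {h : G} (hh : h ∈ H) :
    (MonoidAlgebra.single h (1:ℤ) - 1) ∈ augIdeal G H hn := by
  rw [mem_augIdeal_iff, map_sub, map_one, mapDomainRingHom_single]
  have : (QuotientGroup.mk' H) h = 1 := (QuotientGroup.eq_one_iff h).mpr hh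
  rw [this, MonoidAlgebra.one_def, sub_self]

theorem comp_factor {K H : Subgroup G} [hnK : K.Normal] [hn : H.Normal] (hKH : K ≤ H)
    (x : MonoidAlgebra ℤ G) :
    (MonoidAlgebra.mapDomainRingHom ℤ (QuotientGroup.mk' H) x).coeff =
      Finsupp.mapDomain (⇑(QuotientGroup.map K H (MonoidHom.id G) (by simpa using hKH)))
        (MonoidAlgebra.mapDomainRingHom ℤ (QuotientGroup.mk' K) x).coeff := by
  show Finsupp.mapDomain _ x.coeff = Finsupp.mapDomain _ (Finsupp.mapDomain _ x.coeff)
  rw [← Finsupp.mapDomain_comp]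
  rfl

theorem augIdeal_mono {K H : Subgroup G} [hnK : K.Normal] [hn : H.Normal] (hKH : K ≤ H) :
    augIdeal G K hnK ≤ augIdeal G H hn := by
  intro x hx
  rw [mem_augIdeal_iff] at hx ⊢
  rw [← MonoidAlgebra.coeff_eq_zero, comp_factor hKH, hx, MonoidAlgebra.coeff_zero,
    Finsupp.mapDomain_zero]

theorem mapDomain_apply_eq_sum {A B : Type} [DecidableEq B] (φ : A → B) (v : A →₀ ℤ) (b : B) :
    Finsupp.mapDomain φ v b = ∑ a ∈ v.support.filter (fun a => φ a = b), v a := by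
  rw [Finsupp.mapDomain, Finsupp.sum_apply, Finsupp.sum, Finset.sum_filter]
  exact Finset.sum_congr rfl fun a _ => Finsupp.single_apply

theorem key {H : Subgroup G} [TopologicalSpace G] [IsTopologicalGroup G] [CompactSpace G]
    [T2Space G] [TotallyDisconnectedSpace G] [Infinite G]
    [hn : H.Normal] (hopen : IsOpen (H : Set G)) {r : MonoidAlgebra ℤ G}
    (hr : ∀ (K : Subgroup G) (hnK : K.Normal), IsOpen (K : Set G) → K ≤ H →
      r ∈ idealColon (MonoidAlgebra ℤ G) (augIdeal G K hnK) (augIdeal G H hn) +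
        (augIdeal G H hn : Set (MonoidAlgebra ℤ G))) :
    r ∈ augIdeal G H hn := by
  classical
  rw [mem_augIdeal_iff]
  ext b
  rw [MonoidAlgebra.coeff_zero, Finsupp.coe_zero, Pi.zero_apply]
  by_contra hm
  set m : ℤ := (MonoidAlgebra.mapDomainRingHom ℤ (QuotientGroup.mk' H) r).coeff b with hm_def
  set N : ℕ := m.natAbs with hN
  -- `H` is infinite
  have hfinQ : Finite (G ⧸ H) := Subgroup.quotient_finite_of_isOpen H hopen
  have hInfH : Infinite H := by
    by_contra hfin
    rw [not_infinite_iff_finite] at hfin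
    haveI := hfin
    have : Finite ((G ⧸ H) × H) := inferInstance
    haveI : Finite G :=
      Finite.of_equiv ((G ⧸ H) × ↥H) (Subgroup.groupEquivQuotientProdSubgroup (s := H)).symm
    exact not_finite G
  let e : ℕ ↪ H := Infinite.natEmbedding H
  -- a finite set of "bad" elements to avoid
  let S : Finset G := ((Finset.univ : Finset (Fin (N+1) × Fin (N+1))).filter
      fun p => p.1 ≠ p.2).image fun p => ((e p.1 : G))⁻¹ * (e p.2 : G)
  have heS : ∀ i j : Fin (N+1), i ≠ j → ((e i : G))⁻¹ * (e j : G) ∈ S := by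
    intro i j hij
    exact Finset.mem_image.mpr ⟨(i, j), Finset.mem_filter.mpr ⟨Finset.mem_univ _, hij⟩, rfl⟩
  have hS1 : (1 : G) ∉ S := by
    intro h1
    obtain ⟨⟨i, j⟩, hij, hval⟩ := Finset.mem_image.mp h1
    have hij' : i ≠ j := (Finset.mem_filter.mp hij).2
    have : (e (i : ℕ) : G) = (e (j : ℕ) : G) := by
      have := inv_mul_eq_one.mp hval
      exact this
    exact hij' (Fin.val_injective (e.injective (Subtype.coe_injective this)))
  -- find an open normal subgroup avoiding `S` inside `H`
  have hUopen : IsOpen ((H : Set G) \ (S : Set G)) :=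
    hopen.sdiff (S.finite_toSet.isClosed)
  have hU1 : (1 : G) ∈ (H : Set G) \ (S : Set G) := ⟨H.one_mem, hS1⟩
  obtain ⟨V, hVclopen, hV1, hVU⟩ := compact_exists_isClopen_in_isOpen hUopen hU1
  obtain ⟨K', hK'⟩ :=
    IsTopologicalGroup.exist_openNormalSubgroup_sub_clopen_nhds_of_one hVclopen hV1
  set K : Subgroup G := K'.toSubgroup with hK
  haveI hnK : K.Normal := K'.isNormal'
  have hKopen : IsOpen (K : Set G) := K'.toOpenSubgroup.isOpen
  have hKU : (K : Set G) ⊆ (H : Set G) \ (S : Set G) := fun x hx => hVU (hK' hx)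
  have hKH : K ≤ H := fun x hx => (hKU hx).1
  -- decompose r
  obtain ⟨c, hc, i, hi, hci⟩ := Set.mem_add.mp (hr K hnK hKopen hKH)
  set v : (G ⧸ K) →₀ ℤ :=
    (MonoidAlgebra.mapDomainRingHom ℤ (QuotientGroup.mk' K) c).coeff with hv
  -- v is invariant under left translation by H
  have hinv : ∀ h : G, h ∈ H → ∀ y : G ⧸ K, v (QuotientGroup.mk h * y) = v y := by
    intro h hh y
    have hx : (MonoidAlgebra.single h (1:ℤ) - 1) * c ∈ augIdeal G K hnK :=
      hc _ (single_sub_one_mem hh)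
    rw [mem_augIdeal_iff, map_mul, map_sub, map_one, mapDomainRingHom_single,
      sub_mul, one_mul, sub_eq_zero] at hx
    have := congrArg (fun f : MonoidAlgebra ℤ (G ⧸ K) =>
      f.coeff ((QuotientGroup.mk' K h) * y)) hx
    simp only [MonoidAlgebra.coeff_single_mul_apply, one_mul, inv_mul_cancel_left] at this
    exact this.symm
  -- the coefficient `m` via `G ⧸ K`
  let φ : G ⧸ K →* G ⧸ H := QuotientGroup.map K H (MonoidHom.id G) (by simpa using hKH)
  have hφ : ∀ g : G, φ (QuotientGroup.mk g) = (QuotientGroup.mk g : G ⧸ H) := fun g => rfl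
  have hπi : MonoidAlgebra.mapDomainRingHom ℤ (QuotientGroup.mk' H) i = 0 :=
    (mem_augIdeal_iff i).mp hi
  have hmc : m = Finsupp.mapDomain ⇑φ v b := by
    rw [hm_def, ← hci, map_add, hπi, add_zero, comp_factor hKH]
  rw [mapDomain_apply_eq_sum] at hmc
  set T : Finset (G ⧸ K) := v.support.filter (fun a => φ a = b) with hT
  rcases T.eq_empty_or_nonempty with hTe | ⟨a₀, ha₀⟩
  · rw [hTe, Finset.sum_empty] at hmc
    exact hm hmc
  obtain ⟨g₀, rfl⟩ := QuotientGroup.mk_surjective a₀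
  have ha₀s : v (QuotientGroup.mk g₀) ≠ 0 :=
    Finsupp.mem_support_iff.mp (Finset.mem_filter.mp ha₀).1
  have ha₀b : φ (QuotientGroup.mk g₀) = b := (Finset.mem_filter.mp ha₀).2
  -- all coefficients on the fiber agree
  have hconst : ∀ a ∈ T, v a = v (QuotientGroup.mk g₀) := by
    intro a ha
    obtain ⟨g, rfl⟩ := QuotientGroup.mk_surjective a
    have hgb : φ (QuotientGroup.mk g) = b := (Finset.mem_filter.mp ha).2
    have hgH : (QuotientGroup.mk g : G ⧸ H) = QuotientGroup.mk g₀ := by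
      rw [← hφ, ← hφ, hgb, ha₀b]
    have hmem : g⁻¹ * g₀ ∈ H := QuotientGroup.eq.mp hgH
    have hh : g * g₀⁻¹ ∈ H := by
      have := hn.conj_mem _ hmem g
      have h2 : (g * (g⁻¹ * g₀) * g⁻¹)⁻¹ ∈ H := H.inv_mem this
      simpa [mul_assoc] using h2
    have := hinv _ hh (QuotientGroup.mk g₀)
    rw [← QuotientGroup.mk_mul] at this
    simpa [mul_assoc] using this
  have hsum : m = (T.card : ℤ) * v (QuotientGroup.mk g₀) := by
    rw [hmc, Finset.sum_congr rfl hconst, Finset.sum_const, nsmul_eq_mul]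
  -- the fiber has at least N+1 elements
  let f : Fin (N+1) → G ⧸ K := fun j => QuotientGroup.mk ((e j : G) * g₀)
  have hfT : ∀ j : Fin (N+1), f j ∈ T := by
    intro j
    have hco : f j = QuotientGroup.mk ((e j : G)) * QuotientGroup.mk g₀ := by
      rw [← QuotientGroup.mk_mul]
    have hval : v (f j) = v (QuotientGroup.mk g₀) := by
      rw [hco]; exact hinv _ (e (j : ℕ)).2 _
    refine Finset.mem_filter.mpr ⟨Finsupp.mem_support_iff.mpr ?_, ?_⟩
    · rw [hval]; exact ha₀s
    · show φ (QuotientGroup.mk ((e j : G) * g₀)) = b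
      rw [hφ, QuotientGroup.mk_mul, (QuotientGroup.eq_one_iff _).mpr (e (j:ℕ)).2, one_mul,
        ← hφ, ha₀b]
  have hfinj : Function.Injective f := by
    intro j₁ j₂ hf
    by_contra hne
    have hKmem : ((e j₁ : G) * g₀)⁻¹ * ((e j₂ : G) * g₀) ∈ K := QuotientGroup.eq.mp hf
    have : g₀⁻¹ * (((e j₁ : G))⁻¹ * (e j₂ : G)) * g₀ ∈ K := by
      simpa [mul_assoc, mul_inv_rev] using hKmem
    have hxK : ((e j₁ : G))⁻¹ * (e j₂ : G) ∈ K := by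
      have := hnK.conj_mem _ this g₀
      simpa [mul_assoc] using this
    exact (hKU hxK).2 (heS j₁ j₂ hne)
  have hcard : N + 1 ≤ T.card := by
    have : (Finset.univ.image f).card = N + 1 := by
      rw [Finset.card_image_of_injective _ hfinj, Finset.card_univ, Fintype.card_fin]
    rw [← this]
    exact Finset.card_le_card fun x hx => by
      obtain ⟨j, _, rfl⟩ := Finset.mem_image.mp hx; exact hfT j
  -- contradiction via natAbs
  have habs : m.natAbs = T.card * (v (QuotientGroup.mk g₀)).natAbs := by
    rw [hsum, Int.natAbs_mul, Int.natAbs_natCast]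
  have h1le : 1 ≤ (v (QuotientGroup.mk g₀)).natAbs := Int.natAbs_pos.mpr ha₀s
  have : N + 1 ≤ m.natAbs := by
    calc N + 1 ≤ T.card := hcard
      _ ≤ T.card * (v (QuotientGroup.mk g₀)).natAbs := Nat.le_mul_of_pos_right _ h1le
      _ = m.natAbs := habs.symm
  omega

theorem zero_mem_idealColon {R : Type} [Ring R] (J I : Ideal R) :
    (0 : R) ∈ idealColon R J I := fun i _ => by rw [mul_zero]; exact J.zero_mem

theorem self_mem_colon_add {R : Type} [Ring R] (J I : Ideal R) {r : R} (hr : r ∈ I) :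
    r ∈ idealColon R J I + (I : Set R) :=
  Set.mem_add.mpr ⟨0, zero_mem_idealColon J I, r, hr, zero_add r⟩


/-- **(Chirvasitu–Kanda, Remark 4.4.)** Let `G` be an infinite profinite group and, for an
open normal subgroup `H` of `G`, let `I_H = ker(ℤ[G] → ℤ[G/H])`. Then for every open normal
`H`, `⋂_K ((I_K : I_H) + I_H) = I_H`, where `K` runs over open normal subgroups `K ≤ H`; in
particular the downward filtered set `𝓘 = {I_H}` satisfies the intersection condition
`⋂_{J ∈ 𝓘, J ⊆ I} ((J : I) + I) = I` for all `I ∈ 𝓘`. -/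
theorem stmt_8 (G : Type) [Group G] [TopologicalSpace G] [IsTopologicalGroup G]
    [CompactSpace G] [T2Space G] [TotallyDisconnectedSpace G] [Infinite G] :
    (∀ (H : Subgroup G) (hn : H.Normal), IsOpen (H : Set G) →
      (⋂ (K : Subgroup G) (hnK : K.Normal) (_ : IsOpen (K : Set G)) (_ : K ≤ H),
          (idealColon (MonoidAlgebra ℤ G) (augIdeal G K hnK) (augIdeal G H hn) +
            (augIdeal G H hn : Set (MonoidAlgebra ℤ G)))) =
        (augIdeal G H hn : Set (MonoidAlgebra ℤ G))) ∧
    (∀ I ∈ {I : Ideal (MonoidAlgebra ℤ G) |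
        ∃ (H : Subgroup G) (hn : H.Normal), IsOpen (H : Set G) ∧ I = augIdeal G H hn},
      (⋂ J ∈ {J : Ideal (MonoidAlgebra ℤ G) |
          (∃ (H : Subgroup G) (hn : H.Normal), IsOpen (H : Set G) ∧ J = augIdeal G H hn) ∧
          J ≤ I},
        (idealColon (MonoidAlgebra ℤ G) J I + (I : Set (MonoidAlgebra ℤ G)))) =
      (I : Set (MonoidAlgebra ℤ G))) := by
  constructor
  · intro H hn hopen
    haveI := hn
    apply subset_antisymm
    · intro r hr
      simp only [Set.mem_iInter] at hr
      exact key hopen fun K hnK hKopen hKH => hr K hnK hKopen hKH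
    · intro r hr
      simp only [Set.mem_iInter]
      intro K hnK _ _
      exact self_mem_colon_add _ _ hr
  · rintro I ⟨H, hn, hopen, rfl⟩
    haveI := hn
    apply subset_antisymm
    · intro r hr
      simp only [Set.mem_iInter] at hr
      apply key hopen
      intro K hnK hKopen hKH
      haveI := hnK
      exact hr (augIdeal G K hnK) ⟨⟨K, hnK, hKopen, rfl⟩, augIdeal_mono hKH⟩
    · intro r hr
      simp only [Set.mem_iInter]
      intro J _
      exact self_mem_colon_add _ _ hr
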